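/- arXiv:2303.05898 — 2 statements merged into one kernel-verified Lean document; each statement's English description precedes it below -/
import Mathlib

section
/- For every m ∈ ℝ, s > 0 and x ∈ ℝ, ∫₀^∞ (2π s² φ)^{−1/2} e^{−(x−m)²/(2 s² φ)} · ((1/2)^{1/2}/Γ(1/2)) · φ^{−3/2} e^{−1/(2φ)} dφ = 1/(π s (1 + ((x−m)/s)²)); i.e., a normal density with mean m and variance s²φ mixed over φ with an inverse-Gamma(1/2, 1/2) density equals the Cauchy density with location m and scale s. -/
open Real MeasureTheory

/-- A normal density with mean `m` and variance `s²φ`, mixed over `φ` with an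
inverse-Gamma(1/2, 1/2) density, equals the Cauchy density with location `m`
and scale `s`. -/
theorem normal_invGamma_half_mixture_eq_cauchy (m s x : ℝ) (hs : 0 < s) :
    ∫ φ in Set.Ioi (0 : ℝ),
        (2 * Real.pi * s ^ 2 * φ) ^ (-(1 / 2) : ℝ) *
          Real.exp (-(x - m) ^ 2 / (2 * s ^ 2 * φ)) *
          (((1 : ℝ) / 2) ^ ((1 : ℝ) / 2) / Real.Gamma (1 / 2)) * φ ^ (-(3 / 2) : ℝ) *
          Real.exp (-1 / (2 * φ)) =
      1 / (Real.pi * s * (1 + ((x - m) / s) ^ 2)) := by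
  set r : ℝ := (x - m) ^ 2 / (2 * s ^ 2) + 1 / 2 with hr
  have hrpos : 0 < r := by positivity
  have hπ : (0 : ℝ) < Real.pi := Real.pi_pos
  -- the constant in front
  have hconst : (2 * Real.pi * s ^ 2) ^ (-(1 / 2) : ℝ) *
      (((1 : ℝ) / 2) ^ ((1 : ℝ) / 2) / Real.Gamma (1 / 2)) = 1 / (2 * Real.pi * s) := by
    rw [Real.Gamma_one_half_eq, Real.rpow_neg (by positivity),
      ← Real.sqrt_eq_rpow, ← Real.sqrt_eq_rpow]
    have c1 : Real.sqrt (2 * Real.pi * s ^ 2)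
        = Real.sqrt 2 * Real.sqrt Real.pi * s := by
      rw [Real.sqrt_mul (by positivity), Real.sqrt_mul (by norm_num),
        Real.sqrt_sq hs.le]
    have c2 : Real.sqrt ((1 : ℝ) / 2) = 1 / Real.sqrt 2 := by
      rw [one_div, one_div, Real.sqrt_inv]
    have h2 : Real.sqrt 2 * Real.sqrt 2 = 2 := Real.mul_self_sqrt (by norm_num)
    have hπ2 : Real.sqrt Real.pi * Real.sqrt Real.pi = Real.pi :=
      Real.mul_self_sqrt hπ.le
    have h2pos : (0 : ℝ) < Real.sqrt 2 := Real.sqrt_pos.mpr (by norm_num)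
    have hπpos : (0 : ℝ) < Real.sqrt Real.pi := Real.sqrt_pos.mpr hπ
    rw [c1, c2]
    field_simp
    linear_combination (-(Real.sqrt Real.pi * Real.sqrt Real.pi)) * h2 - 2 * hπ2
  -- pointwise identity on Ioi 0
  have key : ∀ φ ∈ Set.Ioi (0 : ℝ),
      (2 * Real.pi * s ^ 2 * φ) ^ (-(1 / 2) : ℝ) *
          Real.exp (-(x - m) ^ 2 / (2 * s ^ 2 * φ)) *
          (((1 : ℝ) / 2) ^ ((1 : ℝ) / 2) / Real.Gamma (1 / 2)) * φ ^ (-(3 / 2) : ℝ) *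
          Real.exp (-1 / (2 * φ)) =
      (1 / (2 * Real.pi * s)) *
        ((|(-1 : ℝ)| * φ ^ ((-1 : ℝ) - 1)) • Real.exp (-(r * φ ^ (-1 : ℝ)))) := by
    intro φ hφ
    rw [Set.mem_Ioi] at hφ
    have h1 : (2 * Real.pi * s ^ 2 * φ) ^ (-(1 / 2) : ℝ)
        = (2 * Real.pi * s ^ 2) ^ (-(1 / 2) : ℝ) * φ ^ (-(1 / 2) : ℝ) := by
      rw [Real.mul_rpow (by positivity) hφ.le]
    have h3 : φ ^ (-(1 / 2) : ℝ) * φ ^ (-(3 / 2) : ℝ) = φ ^ ((-1 : ℝ) - 1) := by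
      rw [← Real.rpow_add hφ]; norm_num
    have h4 : Real.exp (-(x - m) ^ 2 / (2 * s ^ 2 * φ)) * Real.exp (-1 / (2 * φ))
        = Real.exp (-(r * φ ^ (-1 : ℝ))) := by
      rw [← Real.exp_add, Real.rpow_neg_one]
      congr 1
      have hss : s ^ 2 * s⁻¹ ^ 2 = 1 := by field_simp
      field_simp
      linear_combination (x ^ 2 + m ^ 2 - 2 * x * m) * hss
    calc (2 * Real.pi * s ^ 2 * φ) ^ (-(1 / 2) : ℝ) *
          Real.exp (-(x - m) ^ 2 / (2 * s ^ 2 * φ)) *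
          (((1 : ℝ) / 2) ^ ((1 : ℝ) / 2) / Real.Gamma (1 / 2)) * φ ^ (-(3 / 2) : ℝ) *
          Real.exp (-1 / (2 * φ))
        = ((2 * Real.pi * s ^ 2) ^ (-(1 / 2) : ℝ) *
            (((1 : ℝ) / 2) ^ ((1 : ℝ) / 2) / Real.Gamma (1 / 2))) *
          (φ ^ (-(1 / 2) : ℝ) * φ ^ (-(3 / 2) : ℝ)) *
          (Real.exp (-(x - m) ^ 2 / (2 * s ^ 2 * φ)) * Real.exp (-1 / (2 * φ))) := by
          rw [h1]; ring
      _ = (1 / (2 * Real.pi * s)) *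
            ((|(-1 : ℝ)| * φ ^ ((-1 : ℝ) - 1)) • Real.exp (-(r * φ ^ (-1 : ℝ)))) := by
          rw [hconst, h3, h4, smul_eq_mul, abs_neg, abs_one]; ring
  rw [setIntegral_congr_fun measurableSet_Ioi key, integral_const_mul]
  have hsub : (∫ φ in Set.Ioi (0 : ℝ),
      (|(-1 : ℝ)| * φ ^ ((-1 : ℝ) - 1)) • Real.exp (-(r * φ ^ (-1 : ℝ))))
      = ∫ y in Set.Ioi (0 : ℝ), Real.exp (-(r * y)) :=
    MeasureTheory.integral_comp_rpow_Ioi (fun y => Real.exp (-(r * y))) (by norm_num)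
  rw [hsub]
  have hgamma : (∫ y in Set.Ioi (0 : ℝ), Real.exp (-(r * y))) = 1 / r := by
    have := Real.integral_rpow_mul_exp_neg_mul_Ioi (a := 1) one_pos hrpos
    simpa [Real.rpow_one, Real.Gamma_one] using this
  rw [hgamma]
  have hd : (0 : ℝ) < 1 + ((x - m) / s) ^ 2 := by positivity
  rw [hr]
  field_simp
  ring
end

section
/- For every t > 0, ∫₀^∞ ((1/z)^{1/2}/Γ(1/2)) · t^{−3/2} e^{−1/(z t)} · (1/Γ(1/2)) · z^{−3/2} e^{−1/z} dz = 1/(π √t (1 + t)); i.e., mixing an inverse-Gamma density in t with shape 1/2 and rate 1/z over z distributed as inverse-Gamma with shape 1/2 and rate 1 yields the density of the square of a standard half-Cauchy random variable. -/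
open Real MeasureTheory Filter Set Topology

lemma aux_integral (c : ℝ) (hc : 0 < c) :
    ∫ z in Set.Ioi (0 : ℝ), Real.exp (-c / z) / z ^ 2 = 1 / c := by
  set f : ℝ → ℝ := fun z => if z ≤ 0 then 0 else Real.exp (-c / z) / c with hf
  have hEq : ∀ z ∈ Set.Ioi (0:ℝ), f z = Real.exp (-c / z) / c := by
    intro z hz; simp [hf, not_le.mpr (Set.mem_Ioi.mp hz)]
  have htend0 : Tendsto f (𝓝[>] 0) (𝓝 0) := by
    have h1 : Tendsto (fun z : ℝ => c / z) (𝓝[>] 0) atTop := by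
      simpa [div_eq_mul_inv] using tendsto_inv_nhdsGT_zero.const_mul_atTop hc
    have h2 : Tendsto (fun z : ℝ => Real.exp (-c / z) / c) (𝓝[>] 0) (𝓝 0) := by
      have := (Real.tendsto_exp_neg_atTop_nhds_zero.comp h1).div_const c
      simpa [Function.comp, neg_div] using this
    exact h2.congr' (by filter_upwards [self_mem_nhdsWithin] with z hz using (hEq z hz).symm)
  have hcont : ContinuousWithinAt f (Set.Ici (0:ℝ)) 0 := by
    rw [ContinuousWithinAt]
    have : (𝓝[Set.Ici (0:ℝ)] 0) = (𝓝[{(0:ℝ)}] 0) ⊔ (𝓝[>] 0) := by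
      rw [← nhdsWithin_union, Set.singleton_union, Set.Ioi_insert]
    rw [this]
    have hf0 : f 0 = 0 := by simp [hf]
    rw [hf0]
    refine Tendsto.sup ?_ htend0
    rw [nhdsWithin_singleton]
    simpa [hf0] using tendsto_pure_nhds f 0
  have hderiv : ∀ x ∈ Set.Ioi (0:ℝ), HasDerivAt f (Real.exp (-c / x) / x ^ 2) x := by
    intro x hx
    have hx0 : (0:ℝ) < x := hx
    have h1 : HasDerivAt (fun z : ℝ => -c / z) (c / x ^ 2) x := by
      have h := (hasDerivAt_inv hx0.ne').const_mul (-c)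
      have e : -c * -(x ^ 2)⁻¹ = c / x ^ 2 := by field_simp
      rw [e] at h
      simpa [div_eq_mul_inv] using h
    have h2 : HasDerivAt (fun z : ℝ => Real.exp (-c / z) / c)
        (Real.exp (-c / x) * (c / x ^ 2) / c) x := (h1.exp).div_const c
    have h3 : Real.exp (-c / x) * (c / x ^ 2) / c = Real.exp (-c / x) / x ^ 2 := by
      field_simp
    rw [h3] at h2
    refine h2.congr_of_eventuallyEq ?_
    filter_upwards [eventually_gt_nhds hx0] with z hz
    simp [hf, not_le.mpr hz]
  have hnn : ∀ x ∈ Set.Ioi (0:ℝ), 0 ≤ Real.exp (-c / x) / x ^ 2 := by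
    intro x hx; positivity
  have htop : Tendsto f atTop (𝓝 (1 / c)) := by
    have h1 : Tendsto (fun z : ℝ => -c / z) atTop (𝓝 0) := by
      simpa [div_eq_mul_inv] using tendsto_inv_atTop_zero.const_mul (-c)
    have h2 : Tendsto (fun z : ℝ => Real.exp (-c / z) / c) atTop (𝓝 (1 / c)) := by
      simpa using (Real.continuous_exp.continuousAt.tendsto.comp h1).div_const c
    exact h2.congr' (by filter_upwards [eventually_gt_atTop 0] with z hz using (hEq z hz).symm)
  have := integral_Ioi_of_hasDerivAt_of_nonneg hcont hderiv hnn htop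
  simpa [hf] using this

/-- Mixing an inverse-Gamma density in `t` with shape 1/2 and rate `1/z` over `z`
distributed as inverse-Gamma with shape 1/2 and rate 1 yields the density of the
square of a standard half-Cauchy random variable. -/
theorem invGamma_mixture_eq_sq_halfCauchy_density (t : ℝ) (ht : 0 < t) :
    ∫ z in Set.Ioi (0 : ℝ),
        ((1 / z) ^ ((1 : ℝ) / 2) / Real.Gamma (1 / 2)) * t ^ (-(3 / 2) : ℝ) *
          Real.exp (-1 / (z * t)) * (1 / Real.Gamma (1 / 2)) * z ^ (-(3 / 2) : ℝ) *
          Real.exp (-1 / z) =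
      1 / (Real.pi * Real.sqrt t * (1 + t)) := by
  set c : ℝ := (1 + t) / t with hcdef
  have hc : 0 < c := by positivity
  have hrw : ∀ z ∈ Set.Ioi (0:ℝ),
      ((1 / z) ^ ((1 : ℝ) / 2) / Real.Gamma (1 / 2)) * t ^ (-(3 / 2) : ℝ) *
          Real.exp (-1 / (z * t)) * (1 / Real.Gamma (1 / 2)) * z ^ (-(3 / 2) : ℝ) *
          Real.exp (-1 / z)
        = (t ^ (-(3 / 2) : ℝ) / Real.pi) * (Real.exp (-c / z) / z ^ 2) := by
    intro z hz
    have hz0 : (0:ℝ) < z := hz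
    have hG : Real.Gamma (1/2) = Real.sqrt Real.pi := Real.Gamma_one_half_eq
    have h1 : (1 / z : ℝ) ^ ((1:ℝ)/2) = z ^ (-(1:ℝ)/2) := by
      rw [one_div, Real.inv_rpow hz0.le, ← Real.rpow_neg hz0.le]
      norm_num
    have h2 : z ^ (-(1:ℝ)/2) * z ^ (-(3/2) : ℝ) = (z ^ 2)⁻¹ := by
      rw [← Real.rpow_add hz0]
      norm_num
    have h3 : Real.exp (-1 / (z * t)) * Real.exp (-1 / z) = Real.exp (-c / z) := by
      rw [← Real.exp_add]
      congr 1
      rw [hcdef]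
      field_simp
      ring
    have hsq : Real.sqrt Real.pi * Real.sqrt Real.pi = Real.pi :=
      Real.mul_self_sqrt Real.pi_pos.le
    rw [hG]
    calc ((1/z:ℝ) ^ ((1:ℝ)/2) / Real.sqrt Real.pi) * t ^ (-(3/2) : ℝ) *
          Real.exp (-1 / (z * t)) * (1 / Real.sqrt Real.pi) * z ^ (-(3/2) : ℝ) *
          Real.exp (-1 / z)
        = (t ^ (-(3/2) : ℝ) / (Real.sqrt Real.pi * Real.sqrt Real.pi)) *
            ((z ^ (-(1:ℝ)/2) * z ^ (-(3/2):ℝ)) *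
              (Real.exp (-1/(z*t)) * Real.exp (-1/z))) := by
          rw [h1]; ring
      _ = (t ^ (-(3/2) : ℝ) / Real.pi) * (Real.exp (-c / z) / z ^ 2) := by
          rw [h2, h3, hsq]; ring
  rw [setIntegral_congr_fun measurableSet_Ioi hrw, integral_const_mul, aux_integral c hc]
  have h4 : (1:ℝ)/c = t / (1 + t) := by rw [hcdef]; field_simp
  rw [h4]
  have h5 : t ^ (-(3/2) : ℝ) = (t * Real.sqrt t)⁻¹ := by
    rw [show (-(3/2) : ℝ) = -(3/2) from rfl, Real.rpow_neg ht.le]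
    congr 1
    rw [show ((3:ℝ)/2) = 1 + 1/2 by norm_num, Real.rpow_add ht, Real.rpow_one,
      Real.sqrt_eq_rpow]
  rw [h5]
  have hst : (0:ℝ) < Real.sqrt t := Real.sqrt_pos.mpr ht
  field_simp
end
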